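/- In the Baer–Nunziato system, a state with spatially uniform velocities v₁ = v₂ = v (constant vector) and uniform pressures p₁ = p₂ = p (with P_I = p₂, V_I = v₁) and arbitrary smooth profiles ρ₁(x), ρ₂(x), φ₁(x), evolves so that the velocities and pressures remain uniform: the exact solution is pure advection of ρ₁, ρ₂, φ₁ with speed v, with p and v unchanged. (One-dimensional version.) -/

import Mathlib

/-- Time derivative of an advected profile. -/
lemma keyT (f : ℝ → ℝ) {d : ℝ} (x v t : ℝ) (hf : HasDerivAt f d (x - v * t)) :
    deriv (fun s => f (x - v * s)) t = -v * d := by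
  have hg : HasDerivAt (fun s : ℝ => x - v * s) (-v) t := by
    simpa using ((hasDerivAt_id t).const_mul v).const_sub x
  have := (hf.comp t hg).deriv
  simpa [Function.comp_def, mul_comm] using this

/-- Space derivative of an advected profile. -/
lemma keyX (f : ℝ → ℝ) {d : ℝ} (x v t : ℝ) (hf : HasDerivAt f d (x - v * t)) :
    deriv (fun y => f (y - v * t)) x = d := by
  have hg : HasDerivAt (fun y : ℝ => y - v * t) 1 x := (hasDerivAt_id x).sub_const (v * t)
  have := (hf.comp x hg).deriv
  simpa [Function.comp_def] using this

/-- Mass, momentum and energy balance for one phase under pure advection. -/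
lemma phase (α ρ : ℝ → ℝ) (hα : Differentiable ℝ α) (hρ : Differentiable ℝ ρ)
    (v p A : ℝ) :
    (∀ t x : ℝ, deriv (fun s => α (x - v * s) * ρ (x - v * s)) t
        + deriv (fun y => α (y - v * t) * ρ (y - v * t) * v) x = 0) ∧
    (∀ t x : ℝ, deriv (fun s => α (x - v * s) * ρ (x - v * s) * v) t
        + deriv (fun y => α (y - v * t) * (ρ (y - v * t) * v ^ 2 + p)) x
        - p * deriv (fun y => α (y - v * t)) x = 0) ∧
    (∀ t x : ℝ, deriv (fun s => α (x - v * s) * (A + ρ (x - v * s) * v ^ 2 / 2)) t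
        + deriv (fun y => α (y - v * t) * v * (A + ρ (y - v * t) * v ^ 2 / 2 + p)) x
        + p * deriv (fun s => α (x - v * s)) t = 0) := by
  refine ⟨fun t x => ?_, fun t x => ?_, fun t x => ?_⟩ <;>
  · set pt := x - v * t with hpt
    have Hα : HasDerivAt α (deriv α pt) pt := hα.differentiableAt.hasDerivAt
    have Hρ : HasDerivAt ρ (deriv ρ pt) pt := hρ.differentiableAt.hasDerivAt
    have e1 : deriv (fun s => α (x - v * s) * ρ (x - v * s)) t
        = -v * (deriv α pt * ρ pt + α pt * deriv ρ pt) :=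
      keyT (fun z => α z * ρ z) x v t (Hα.mul Hρ)
    have e2 : deriv (fun y => α (y - v * t) * ρ (y - v * t) * v) x
        = (deriv α pt * ρ pt + α pt * deriv ρ pt) * v :=
      keyX (fun z => α z * ρ z * v) x v t ((Hα.mul Hρ).mul_const v)
    have e3 : deriv (fun s => α (x - v * s) * ρ (x - v * s) * v) t
        = -v * ((deriv α pt * ρ pt + α pt * deriv ρ pt) * v) :=
      keyT (fun z => α z * ρ z * v) x v t ((Hα.mul Hρ).mul_const v)
    have e4 : deriv (fun y => α (y - v * t) * (ρ (y - v * t) * v ^ 2 + p)) x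
        = deriv α pt * (ρ pt * v ^ 2 + p) + α pt * (deriv ρ pt * v ^ 2) :=
      keyX (fun z => α z * (ρ z * v ^ 2 + p)) x v t
        (Hα.mul ((Hρ.mul_const (v ^ 2)).add_const p))
    have e5 : deriv (fun y => α (y - v * t)) x = deriv α pt := keyX α x v t Hα
    have e6 : deriv (fun s => α (x - v * s) * (A + ρ (x - v * s) * v ^ 2 / 2)) t
        = -v * (deriv α pt * (A + ρ pt * v ^ 2 / 2) + α pt * (deriv ρ pt * v ^ 2 / 2)) :=
      keyT (fun z => α z * (A + ρ z * v ^ 2 / 2)) x v t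
        (Hα.mul (((Hρ.mul_const (v ^ 2)).div_const 2).const_add A))
    have e7 : deriv (fun y => α (y - v * t) * v * (A + ρ (y - v * t) * v ^ 2 / 2 + p)) x
        = deriv α pt * v * (A + ρ pt * v ^ 2 / 2 + p)
          + α pt * v * (deriv ρ pt * v ^ 2 / 2) :=
      keyX (fun z => α z * v * (A + ρ z * v ^ 2 / 2 + p)) x v t
        ((Hα.mul_const v).mul ((((Hρ.mul_const (v ^ 2)).div_const 2).const_add A).add_const p))
    have e8 : deriv (fun s => α (x - v * s)) t = -v * deriv α pt := keyT α x v t Hα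
    first
      | (rw [e1, e2]; ring)
      | (rw [e3, e4, e5]; ring)
      | (rw [e6, e7, e8]; ring)

theorem stmt9 (ρ1 ρ2 φ : ℝ → ℝ)
    (hρ1 : Differentiable ℝ ρ1) (hρ2 : Differentiable ℝ ρ2) (hφ : Differentiable ℝ φ)
    (v p γ1 γ2 π1 π2 : ℝ) (hγ1 : 1 < γ1) (hγ2 : 1 < γ2) :
    -- solid mass
    (∀ t x : ℝ, deriv (fun s => φ (x - v * s) * ρ1 (x - v * s)) t
        + deriv (fun y => φ (y - v * t) * ρ1 (y - v * t) * v) x = 0) ∧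
    -- solid momentum, with interfacial pressure P_I = p
    (∀ t x : ℝ, deriv (fun s => φ (x - v * s) * ρ1 (x - v * s) * v) t
        + deriv (fun y => φ (y - v * t) * (ρ1 (y - v * t) * v ^ 2 + p)) x
        - p * deriv (fun y => φ (y - v * t)) x = 0) ∧
    -- solid energy, ρ₁E₁ = (p + γ₁π₁)/(γ₁−1) + ρ₁v²/2
    (∀ t x : ℝ, deriv (fun s => φ (x - v * s) *
          ((p + γ1 * π1) / (γ1 - 1) + ρ1 (x - v * s) * v ^ 2 / 2)) t
        + deriv (fun y => φ (y - v * t) * v *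
          ((p + γ1 * π1) / (γ1 - 1) + ρ1 (y - v * t) * v ^ 2 / 2 + p)) x
        + p * deriv (fun s => φ (x - v * s)) t = 0) ∧
    -- gas mass, φ₂ = 1 − φ₁
    (∀ t x : ℝ, deriv (fun s => (1 - φ (x - v * s)) * ρ2 (x - v * s)) t
        + deriv (fun y => (1 - φ (y - v * t)) * ρ2 (y - v * t) * v) x = 0) ∧
    -- gas momentum
    (∀ t x : ℝ, deriv (fun s => (1 - φ (x - v * s)) * ρ2 (x - v * s) * v) t
        + deriv (fun y => (1 - φ (y - v * t)) * (ρ2 (y - v * t) * v ^ 2 + p)) x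
        - p * deriv (fun y => (1 - φ (y - v * t))) x = 0) ∧
    -- gas energy
    (∀ t x : ℝ, deriv (fun s => (1 - φ (x - v * s)) *
          ((p + γ2 * π2) / (γ2 - 1) + ρ2 (x - v * s) * v ^ 2 / 2)) t
        + deriv (fun y => (1 - φ (y - v * t)) * v *
          ((p + γ2 * π2) / (γ2 - 1) + ρ2 (y - v * t) * v ^ 2 / 2 + p)) x
        + p * deriv (fun s => (1 - φ (x - v * s))) t = 0) ∧
    -- compaction equation with V_I = v
    (∀ t x : ℝ, deriv (fun s => φ (x - v * s)) t + v * deriv (fun y => φ (y - v * t)) x = 0) := by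
  obtain ⟨h1, h2, h3⟩ := phase φ ρ1 hφ hρ1 v p ((p + γ1 * π1) / (γ1 - 1))
  obtain ⟨h4, h5, h6⟩ := phase (fun z => 1 - φ z) ρ2 ((differentiable_const 1).sub hφ) hρ2
    v p ((p + γ2 * π2) / (γ2 - 1))
  refine ⟨h1, h2, h3, h4, h5, h6, fun t x => ?_⟩
  have Hφ : HasDerivAt φ (deriv φ (x - v * t)) (x - v * t) := hφ.differentiableAt.hasDerivAt
  rw [keyT φ x v t Hφ, keyX φ x v t Hφ]
  ring
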